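/- arXiv:1511.06385 — 3 statements merged into one kernel-verified Lean document; each statement's English description precedes it below -/
import Mathlib

section
/- Let n ≥ 1, let g ∈ ℝⁿ, and let σ > 0. Suppose there is an index i₀ such that |gⱼ| < |g_{i₀}| for every j ≠ i₀ (the maximal-magnitude coordinate is unique and nonzero). For p ∈ (1, ∞) with dual exponent q = p/(p-1), let ε(p) ∈ ℝⁿ be defined by ε(p)ᵢ = σ · sign(gᵢ) · (|gᵢ| / ‖g‖_q)^{1/(p-1)}. Then as p → 1⁺, ε(p)_{i₀} converges to σ · sign(g_{i₀}) and ε(p)ⱼ converges to 0 for every j ≠ i₀. That is, in the limit p → 1 the optimal gradient perturbation concentrates its entire budget σ on the coordinate of largest absolute gradient. -/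
open Finset Filter

private lemma pert_inv_sub_atTop :
    Tendsto (fun p : ℝ => (p - 1)⁻¹) (nhdsWithin 1 (Set.Ioi 1)) atTop := by
  apply tendsto_inv_nhdsGT_zero.comp
  apply tendsto_nhdsWithin_of_tendsto_nhds_of_eventually_within
  · have h : Tendsto (fun p : ℝ => p - 1) (nhds 1) (nhds (1 - 1)) :=
      (continuous_sub_right (1 : ℝ)).tendsto 1
    rw [sub_self] at h
    exact h.mono_left nhdsWithin_le_nhds
  · filter_upwards [self_mem_nhdsWithin] with p hp
    simpa [Set.mem_Ioi] using hp

private lemma pert_q_atTop :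
    Tendsto (fun p : ℝ => p / (p - 1)) (nhdsWithin 1 (Set.Ioi 1)) atTop := by
  have h1 : Tendsto (fun p : ℝ => p) (nhdsWithin 1 (Set.Ioi 1)) (nhds 1) :=
    tendsto_id.mono_left nhdsWithin_le_nhds
  simpa [div_eq_mul_inv] using Tendsto.pos_mul_atTop one_pos h1 pert_inv_sub_atTop

/-- As `p → 1⁺`, the optimal gradient perturbation
`ε(p) i = σ * sign (g i) * (|g i| / ‖g‖_{p/(p-1)})^(1/(p-1))` concentrates its
entire budget `σ` on the unique coordinate `i₀` of largest absolute gradient: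
`ε(p) i₀ → σ * sign (g i₀)` and `ε(p) j → 0` for all `j ≠ i₀`. -/
theorem perturbation_tendsto_budget_concentration (n : ℕ) (hn : 1 ≤ n)
    (g : Fin n → ℝ) (σ : ℝ) (hσ : 0 < σ) (i₀ : Fin n)
    (hmax : ∀ j, j ≠ i₀ → |g j| < |g i₀|) (hg : g i₀ ≠ 0) :
    Tendsto (fun p : ℝ =>
        σ * Real.sign (g i₀) *
          (|g i₀| / (∑ j, |g j| ^ (p / (p - 1))) ^ (1 / (p / (p - 1)))) ^ (1 / (p - 1)))
      (nhdsWithin 1 (Set.Ioi 1)) (nhds (σ * Real.sign (g i₀))) ∧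
    (∀ j, j ≠ i₀ →
      Tendsto (fun p : ℝ =>
          σ * Real.sign (g j) *
            (|g j| / (∑ k, |g k| ^ (p / (p - 1))) ^ (1 / (p / (p - 1)))) ^ (1 / (p - 1)))
        (nhdsWithin 1 (Set.Ioi 1)) (nhds 0)) := by
  set l := nhdsWithin (1 : ℝ) (Set.Ioi 1) with hl
  have hM : (0 : ℝ) < |g i₀| := abs_pos.mpr hg
  set M := |g i₀| with hMdef
  -- the normalized sum S p = ∑ (|g k|/M)^(p/(p-1)) tends to 1
  set S : ℝ → ℝ := fun p => ∑ k, (|g k| / M) ^ (p / (p - 1)) with hSdef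
  have hS : Tendsto S l (nhds 1) := by
    have h : Tendsto (fun p : ℝ => ∑ k, (|g k| / M) ^ (p / (p - 1))) l
        (nhds (∑ k, if k = i₀ then (1 : ℝ) else 0)) := by
      refine tendsto_finset_sum Finset.univ fun k _ => ?_
      by_cases hk : k = i₀
      · subst hk
        have : (fun p : ℝ => (|g k| / M) ^ (p / (p - 1))) = fun _ => (1 : ℝ) := by
          funext p
          rw [div_self hM.ne', Real.one_rpow]
        rw [this, if_pos rfl]
        exact tendsto_const_nhds
      · rw [if_neg hk]
        have hr0 : 0 ≤ |g k| / M := div_nonneg (abs_nonneg _) hM.le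
        have hr1 : |g k| / M < 1 := (div_lt_one hM).mpr (hmax k hk)
        exact (tendsto_rpow_atTop_of_base_lt_one _ (by linarith) hr1).comp pert_q_atTop
    simpa [Finset.sum_ite_eq'] using h
  -- S p ^ (-(1/p)) tends to 1
  have hexp : Tendsto (fun p : ℝ => -(1 / p)) l (nhds (-1)) := by
    have : Tendsto (fun p : ℝ => -(1 / p)) (nhds 1) (nhds (-(1 / 1))) :=
      ((continuousAt_const.div continuousAt_id one_ne_zero).neg)
    simpa using this.mono_left nhdsWithin_le_nhds
  have hSinv : Tendsto (fun p => S p ^ (-(1 / p))) l (nhds 1) := by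
    have := hS.rpow hexp (Or.inl one_ne_zero)
    simpa using this
  -- key algebraic identity, for p > 1 and any coordinate i
  have key : ∀ i : Fin n, ∀ p : ℝ, 1 < p →
      (|g i| / (∑ k, |g k| ^ (p / (p - 1))) ^ (1 / (p / (p - 1)))) ^ (1 / (p - 1)) =
        (|g i| / M) ^ (1 / (p - 1)) * S p ^ (-(1 / p)) := by
    intro i p hp
    have hp0 : (0 : ℝ) < p := by linarith
    have ht : (0 : ℝ) < p - 1 := by linarith
    set q : ℝ := p / (p - 1) with hq
    have hq0 : (0 : ℝ) < q := div_pos hp0 ht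
    have hS0 : (0 : ℝ) < S p := by
      have hterm : (0 : ℝ) < (|g i₀| / M) ^ q := by
        rw [div_self hM.ne', Real.one_rpow]; exact one_pos
      have : ∀ k ∈ Finset.univ, (0:ℝ) ≤ (|g k| / M) ^ q :=
        fun k _ => Real.rpow_nonneg (div_nonneg (abs_nonneg _) hM.le) _
      exact Finset.sum_pos' this ⟨i₀, Finset.mem_univ _, hterm⟩
    have hT : (∑ k, |g k| ^ q) = M ^ q * S p := by
      rw [hSdef, Finset.mul_sum]
      refine Finset.sum_congr rfl fun k _ => ?_
      rw [Real.div_rpow (abs_nonneg _) hM.le]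
      field_simp
      rw [hq]
      ring
    have hTq : ((∑ k, |g k| ^ q) ^ (1 / q)) = M * S p ^ (1 / q) := by
      rw [hT, Real.mul_rpow (Real.rpow_nonneg hM.le _) hS0.le,
        ← Real.rpow_mul hM.le, mul_one_div_cancel hq0.ne', Real.rpow_one]
    have hSq0 : (0 : ℝ) < S p ^ (1 / q) := Real.rpow_pos_of_pos hS0 _
    have hbase : |g i| / ((∑ k, |g k| ^ q) ^ (1 / q)) =
        (|g i| / M) * S p ^ (-(1 / q)) := by
      rw [hTq, Real.rpow_neg hS0.le, div_mul_eq_div_div, div_eq_mul_inv (|g i| / M)]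
    rw [hbase, Real.mul_rpow (div_nonneg (abs_nonneg _) hM.le) (by positivity)]
    congr 1
    rw [← Real.rpow_mul hS0.le]
    congr 1
    rw [hq]
    field_simp
  -- limits
  constructor
  · have heq : ∀ᶠ p in l, σ * Real.sign (g i₀) * S p ^ (-(1 / p)) =
        σ * Real.sign (g i₀) *
        (|g i₀| / (∑ j, |g j| ^ (p / (p - 1))) ^ (1 / (p / (p - 1)))) ^ (1 / (p - 1)) := by
      filter_upwards [self_mem_nhdsWithin] with p hp
      rw [key i₀ p hp, div_self hM.ne', Real.one_rpow, one_mul]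
    refine Tendsto.congr' heq ?_
    have := tendsto_const_nhds (x := σ * Real.sign (g i₀)) (f := l) |>.mul hSinv
    simpa using this
  · intro j hj
    by_cases hgj : g j = 0
    · have : (fun p : ℝ => σ * Real.sign (g j) *
          (|g j| / (∑ k, |g k| ^ (p / (p - 1))) ^ (1 / (p / (p - 1)))) ^ (1 / (p - 1))) =
          fun _ => (0 : ℝ) := by
        funext p; rw [hgj, Real.sign_zero, mul_zero, zero_mul]
      rw [this]
      exact tendsto_const_nhds
    · have hr0 : 0 ≤ |g j| / M := div_nonneg (abs_nonneg _) hM.le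
      have hr1 : |g j| / M < 1 := (div_lt_one hM).mpr (hmax j hj)
      have hrlim : Tendsto (fun p : ℝ => (|g j| / M) ^ (1 / (p - 1))) l (nhds 0) := by
        have := (tendsto_rpow_atTop_of_base_lt_one _ (by linarith) hr1).comp
          pert_inv_sub_atTop
        simpa [one_div, Function.comp_def] using this
      have heq : ∀ᶠ p in l,
          σ * Real.sign (g j) * ((|g j| / M) ^ (1 / (p - 1)) * S p ^ (-(1 / p))) =
          σ * Real.sign (g j) *
          (|g j| / (∑ k, |g k| ^ (p / (p - 1))) ^ (1 / (p / (p - 1)))) ^ (1 / (p - 1)) := by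
        filter_upwards [self_mem_nhdsWithin] with p hp
        rw [key j p hp]
      refine Tendsto.congr' heq ?_
      have h2 := hrlim.mul hSinv
      have := tendsto_const_nhds (x := σ * Real.sign (g j)) (f := l) |>.mul h2
      simpa using this
end

section
/- Fix N, m ≥ 1 and an index l ∈ {1, …, N}. Let F : ℝᵐ → ℝᴺ be differentiable at a point x with F(x)_l > 0, and let f : ℝᴺ → ℝ be the cross-entropy loss f(y) = -log(y_l) with one-hot target at class l. Let J denote the Jacobian matrix of F at x (the m×N matrix whose (a,i) entry is ∂Fᵢ/∂x_a, arranged so that ∇_x(f∘F) = J · ∇_y f(F(x))), let g = ∇_x(f∘F)(x) ∈ ℝᵐ be the gradient of the composite loss with respect to the input, and let H = H_f(F(x)) be the N×N Hessian of f at F(x). Then g · gᵀ = J · H · Jᵀ as m×m matrices: the outer product of the input gradient of the cross-entropy loss equals the Gauss–Newton matrix. -/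
open Finset Matrix

/-- Gauss–Newton identity for the cross-entropy loss: if `F : ℝᵐ → ℝᴺ` is
differentiable at `x` with `F x l > 0`, `f y = -log (y l)` is the cross-entropy
loss with one-hot target at class `l`, `J` is the Jacobian of `F` at `x`
(arranged as an `m × N` matrix with `J a i = ∂Fᵢ/∂x_a`), `g = ∇_x (f ∘ F)(x)`
is the input gradient and `H = H_f(F x)` is the Hessian of `f` at `F x`, then
`g gᵀ = J H Jᵀ` as `m × m` matrices. -/
theorem gradient_outer_eq_gaussNewton (N m : ℕ) (hN : 1 ≤ N) (hm : 1 ≤ m)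
    (l : Fin N) (F : (Fin m → ℝ) → (Fin N → ℝ)) (x : Fin m → ℝ)
    (hF : DifferentiableAt ℝ F x) (hFx : 0 < F x l)
    (f : (Fin N → ℝ) → ℝ) (hf : ∀ y, f y = -Real.log (y l))
    (J : Matrix (Fin m) (Fin N) ℝ)
    (hJ : ∀ a i, J a i = fderiv ℝ (fun z => F z i) x (Pi.single a 1))
    (g : Fin m → ℝ)
    (hg : ∀ a, g a = fderiv ℝ (fun z => f (F z)) x (Pi.single a 1))
    (H : Matrix (Fin N) (Fin N) ℝ)
    (hH : ∀ i j, H i j = iteratedFDeriv ℝ 2 f (F x) ![Pi.single i 1, Pi.single j 1]) :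
    vecMulVec g g = J * H * Jᵀ := by
  set c : Fin N → ℝ := F x with hc
  set L : (Fin N → ℝ) →L[ℝ] ℝ := ContinuousLinearMap.proj l with hL
  -- derivative of f at points with positive l-coordinate
  have h1 : ∀ y : Fin N → ℝ, 0 < y l → HasFDerivAt f ((-(y l)⁻¹) • L) y := by
    intro y hy
    have hev : HasFDerivAt (fun y : Fin N → ℝ => y l) L y := L.hasFDerivAt
    have hlog := (Real.hasDerivAt_log hy.ne').comp_hasFDerivAt y hev
    have hneg := hlog.neg
    have : f = fun y : Fin N → ℝ => -Real.log (y l) := funext hf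
    rw [this]
    refine hneg.congr_fderiv ?_
    ext v
    simp [neg_smul]
  -- auxiliary map: candidate for `fderiv ℝ f` near `c`
  set φ : (Fin N → ℝ) → ((Fin N → ℝ) →L[ℝ] ℝ) := fun y => (-(y l)⁻¹) • L with hφdef
  have hev_eq : fderiv ℝ f =ᶠ[nhds c] φ := by
    have hopen : IsOpen {y : Fin N → ℝ | 0 < y l} :=
      isOpen_lt continuous_const (continuous_apply l)
    filter_upwards [hopen.mem_nhds hFx] with y hy
    exact (h1 y hy).fderiv
  -- derivative of φ at c
  have hs : HasFDerivAt (fun y : Fin N → ℝ => -(y l)⁻¹) (((c l)^2)⁻¹ • L) c := by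
    have hev : HasFDerivAt (fun y : Fin N → ℝ => y l) L c := L.hasFDerivAt
    have hinv := ((hasDerivAt_inv hFx.ne' : HasDerivAt _ _ (c l)).comp_hasFDerivAt c hev).neg
    refine hinv.congr_fderiv ?_
    ext v
    simp
  have hφ : HasFDerivAt φ ((((c l)^2)⁻¹ • L).smulRight L) c := by
    have := hs.smul (hasFDerivAt_const L c)
    refine this.congr_fderiv ?_
    ext v w
    simp
  have hfd2 : fderiv ℝ (fderiv ℝ f) c = (((c l)^2)⁻¹ • L).smulRight L := by
    rw [hev_eq.fderiv_eq, hφ.fderiv]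
  -- Hessian entries
  have hHval : ∀ i j, H i j = ((c l)^2)⁻¹ * ((Pi.single i 1 : Fin N → ℝ) l) * ((Pi.single j 1 : Fin N → ℝ) l) := by
    intro i j
    rw [hH, iteratedFDeriv_two_apply, hfd2]
    simp only [ContinuousLinearMap.smulRight_apply, ContinuousLinearMap.smul_apply,
      smul_eq_mul, hL, ContinuousLinearMap.proj_apply, Matrix.cons_val_zero,
      Matrix.cons_val_one, Matrix.head_cons]
  -- gradient of composite
  have hcomp : ∀ a, g a = -(c l)⁻¹ * (fderiv ℝ F x (Pi.single a 1) l) := by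
    intro a
    have hd := ((h1 c hFx).comp x hF.hasFDerivAt).fderiv
    rw [hg]
    have : (fun z => f (F z)) = f ∘ F := rfl
    rw [this, hd]
    simp [hL]
  have hJval : ∀ a i, J a i = fderiv ℝ F x (Pi.single a 1) i := by
    intro a i
    rw [hJ]
    have hd := ((ContinuousLinearMap.proj i : (Fin N → ℝ) →L[ℝ] ℝ).hasFDerivAt.comp x
      hF.hasFDerivAt).fderiv
    have : (fun z => F z i) = (ContinuousLinearMap.proj i : (Fin N → ℝ) →L[ℝ] ℝ) ∘ F := rfl
    rw [this, hd]
    simp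
  -- finish
  ext a b
  have hgl : g a = -(c l)⁻¹ * J a l := by rw [hcomp, hJval]
  have hgl' : g b = -(c l)⁻¹ * J b l := by rw [hcomp, hJval]
  simp only [vecMulVec_apply, Matrix.mul_apply, Matrix.transpose_apply]
  have hsum : ∑ j, (∑ i, J a i * H i j) * J b j = ((c l)^2)⁻¹ * J a l * J b l := by
    have hin : ∀ j, (∑ i, J a i * H i j) = J a l * (((c l)^2)⁻¹ * (Pi.single j 1 : Fin N → ℝ) l) := by
      intro j
      rw [Finset.sum_eq_single l]
      · rw [hHval, Pi.single_eq_same]; ring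
      · intro i _ hi
        rw [hHval]
        simp [Pi.single_apply, hi]
      · simp
    simp only [hin]
    rw [Finset.sum_eq_single l]
    · rw [Pi.single_eq_same]; ring
    · intro j _ hj
      simp [Pi.single_apply, hj]
    · simp
  rw [hsum, hgl, hgl']
  have h2 : ((c l)^2)⁻¹ = (c l)⁻¹ * (c l)⁻¹ := by rw [sq, mul_inv]
  rw [h2]; ring
end

section
/- Let d ≥ 1, n ≥ 1, and s > 0, and set σ² = s²/d. Let μ be the product measure on ℝ^d whose coordinates are i.i.d. gaussianReal 0 σ² (the law of η ~ N(0, σ²I_d)), and let e₁, …, eₙ ∈ ℝ^d be unit vectors. Then the probability that the Gaussian noise produces an adversarial example at perturbation scale s satisfies μ{x : ∃ i, ⟨x, eᵢ⟩ ≥ s} ≤ n · exp(-d/2). Hence, when the per-coordinate noise variance matches the mean distortion s²/d of adversarial examples of length s, the probability that isotropic Gaussian noise crosses any of the n adversarial decision thresholds is at most n·e^{-d/2}, which for fixed n decays exponentially in the input dimension d. -/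
open Finset MeasureTheory ProbabilityTheory Real
open scoped NNReal ENNReal

lemma gauss_pdf_tilt (a : ℝ) (v : ℝ≥0) (hv : v ≠ 0) (y : ℝ) :
    rexp (a * y) * gaussianPDFReal 0 v y
      = rexp ((v : ℝ) * a ^ 2 / 2) * gaussianPDFReal (a * v) v y := by
  have hv' : (v : ℝ) ≠ 0 := by exact_mod_cast hv
  simp only [gaussianPDFReal]
  rw [mul_left_comm, mul_left_comm (rexp _)]
  congr 1
  rw [← Real.exp_add, ← Real.exp_add]
  congr 1
  field_simp
  ring

lemma gauss_mgf_int (a : ℝ) (v : ℝ≥0) (hv : v ≠ 0) :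
    Integrable (fun y => rexp (a * y)) (gaussianReal 0 v) := by
  rw [gaussianReal_of_var_ne_zero _ hv, gaussianPDF_def]
  have hmeas : Measurable fun y => (gaussianPDFReal 0 v y).toNNReal :=
    (measurable_gaussianPDFReal 0 v).real_toNNReal
  rw [show (fun x => ENNReal.ofReal (gaussianPDFReal 0 v x))
      = fun x => ((fun y => (gaussianPDFReal 0 v y).toNNReal) x : ℝ≥0∞) from rfl,
    integrable_withDensity_iff_integrable_smul hmeas]
  have : (fun y => ((gaussianPDFReal 0 v y).toNNReal : ℝ≥0) • rexp (a * y))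
      = fun y => rexp ((v : ℝ) * a ^ 2 / 2) * gaussianPDFReal (a * v) v y := by
    ext y
    rw [NNReal.smul_def, smul_eq_mul, Real.coe_toNNReal _ (gaussianPDFReal_nonneg 0 v y),
      mul_comm, gauss_pdf_tilt a v hv]
  rw [this]
  exact (integrable_gaussianPDFReal _ _).const_mul _

lemma gauss_mgf (a : ℝ) (v : ℝ≥0) (hv : v ≠ 0) :
    ∫ y, rexp (a * y) ∂(gaussianReal 0 v) = rexp ((v : ℝ) * a ^ 2 / 2) := by
  rw [gaussianReal_of_var_ne_zero _ hv, gaussianPDF_def]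
  have hmeas : Measurable fun y => (gaussianPDFReal 0 v y).toNNReal :=
    (measurable_gaussianPDFReal 0 v).real_toNNReal
  rw [show (fun x => ENNReal.ofReal (gaussianPDFReal 0 v x))
      = fun x => ((fun y => (gaussianPDFReal 0 v y).toNNReal) x : ℝ≥0∞) from rfl,
    integral_withDensity_eq_integral_smul hmeas]
  have : (fun y => ((gaussianPDFReal 0 v y).toNNReal : ℝ≥0) • rexp (a * y))
      = fun y => rexp ((v : ℝ) * a ^ 2 / 2) * gaussianPDFReal (a * v) v y := by
    ext y
    rw [NNReal.smul_def, smul_eq_mul, Real.coe_toNNReal _ (gaussianPDFReal_nonneg 0 v y),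
      mul_comm, gauss_pdf_tilt a v hv]
  rw [this, integral_const_mul, integral_gaussianPDFReal_eq_one (a * v) hv, mul_one]

lemma pi_integral_prod {d : ℕ} (ν : Measure ℝ) [SigmaFinite ν] (f : Fin d → ℝ → ℝ) :
    ∫ x : Fin d → ℝ, ∏ j, f j (x j) ∂(Measure.pi fun _ => ν) = ∏ j, ∫ y, f j y ∂ν := by
  letI : MeasureSpace ℝ := ⟨ν⟩
  exact integral_fintype_prod_eq_prod (μ := fun _ => ν) f

lemma pi_integrable_prod {d : ℕ} (ν : Measure ℝ) [SigmaFinite ν] (f : Fin d → ℝ → ℝ)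
    (hf : ∀ j, Integrable (f j) ν) :
    Integrable (fun x : Fin d → ℝ => ∏ j, f j (x j)) (Measure.pi fun _ => ν) := by
  letI : MeasureSpace ℝ := ⟨ν⟩
  exact Integrable.fintype_prod hf

/-- When the per-coordinate noise variance is `σ² = s²/d`, matching the mean
distortion of adversarial examples of length `s`, the probability that an
isotropic Gaussian perturbation `η ~ N(0, σ²I_d)` crosses any of the `n`
adversarial decision thresholds is at most `n · exp (-d/2)`. -/
theorem gaussian_adversarial_prob_exponentially_small (d n : ℕ)
    (hd : 1 ≤ d) (hn : 1 ≤ n) (s : NNReal) (hs : 0 < s)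
    (μ : Measure (Fin d → ℝ))
    (hμ : μ = Measure.pi fun _ : Fin d => gaussianReal 0 (s ^ 2 / d))
    (e : Fin n → Fin d → ℝ) (he : ∀ i, ∑ j, e i j ^ 2 = 1) :
    μ {x | ∃ i, (s : ℝ) ≤ ∑ j, e i j * x j} ≤
      n * ENNReal.ofReal (Real.exp (-(d : ℝ) / 2)) := by
  set v : ℝ≥0 := s ^ 2 / d with hv_def
  have hd0 : (d : ℝ) ≠ 0 := by positivity
  have hs0 : (s : ℝ) ≠ 0 := by exact_mod_cast hs.ne'
  have hv : v ≠ 0 := by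
    rw [hv_def]
    refine div_ne_zero (pow_ne_zero _ hs.ne') ?_
    exact_mod_cast (Nat.one_le_iff_ne_zero.mp hd)
  have hvr : (v : ℝ) = (s : ℝ) ^ 2 / d := by
    rw [hv_def]; push_cast; ring
  subst hμ
  set t : ℝ := d / s with ht_def
  have ht0 : 0 ≤ t := by positivity
  haveI : IsProbabilityMeasure (Measure.pi fun _ : Fin d => gaussianReal 0 v) := by
    infer_instance
  -- bound each single event
  have key : ∀ i, (Measure.pi fun _ : Fin d => gaussianReal 0 v)
      {x | (s : ℝ) ≤ ∑ j, e i j * x j} ≤ ENNReal.ofReal (Real.exp (-(d : ℝ) / 2)) := by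
    intro i
    set ν := Measure.pi fun _ : Fin d => gaussianReal 0 v with hν
    have hint : Integrable (fun x : Fin d → ℝ => rexp (t * ∑ j, e i j * x j)) ν := by
      have : (fun x : Fin d → ℝ => rexp (t * ∑ j, e i j * x j))
          = fun x => ∏ j, rexp (t * e i j * x j) := by
        ext x
        rw [← Real.exp_sum, mul_sum]
        congr 1; exact Finset.sum_congr rfl fun j _ => by ring
      rw [this]
      exact pi_integrable_prod _ _ fun j => gauss_mgf_int (t * e i j) v hv
    have hmgf : mgf (fun x : Fin d → ℝ => ∑ j, e i j * x j) ν t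
        = rexp ((v : ℝ) * t ^ 2 / 2) := by
      unfold mgf
      have : (fun x : Fin d → ℝ => rexp (t * ∑ j, e i j * x j))
          = fun x => ∏ j, rexp (t * e i j * x j) := by
        ext x
        rw [← Real.exp_sum, mul_sum]
        congr 1; exact Finset.sum_congr rfl fun j _ => by ring
      rw [this, hν, pi_integral_prod (gaussianReal 0 v) (fun j y => rexp (t * e i j * y))]
      have : ∀ j, ∫ y, rexp (t * e i j * y) ∂(gaussianReal 0 v)
          = rexp ((v : ℝ) * (t * e i j) ^ 2 / 2) := fun j => gauss_mgf _ v hv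
      rw [Finset.prod_congr rfl fun j _ => this j, ← Real.exp_sum]
      congr 1
      rw [← Finset.sum_div, ← Finset.mul_sum]
      have : ∑ j, (t * e i j) ^ 2 = t ^ 2 * ∑ j, e i j ^ 2 := by
        rw [Finset.mul_sum]; exact Finset.sum_congr rfl fun j _ => by ring
      rw [this, he i, mul_one]
    have hch := measure_ge_le_exp_mul_mgf (μ := ν)
      (X := fun x : Fin d → ℝ => ∑ j, e i j * x j) (s : ℝ) ht0 hint
    rw [hmgf, ← Real.exp_add] at hch
    have harg : -t * (s : ℝ) + (v : ℝ) * t ^ 2 / 2 = -(d : ℝ) / 2 := by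
      rw [ht_def, hvr]
      field_simp
      ring
    rw [harg] at hch
    calc ν {x | (s : ℝ) ≤ ∑ j, e i j * x j}
        = ENNReal.ofReal (ν {x | (s : ℝ) ≤ ∑ j, e i j * x j}).toReal :=
          (ENNReal.ofReal_toReal (measure_ne_top _ _)).symm
      _ ≤ ENNReal.ofReal (Real.exp (-(d : ℝ) / 2)) := ENNReal.ofReal_le_ofReal hch
  calc (Measure.pi fun _ : Fin d => gaussianReal 0 v)
        {x | ∃ i, (s : ℝ) ≤ ∑ j, e i j * x j}
      = (Measure.pi fun _ : Fin d => gaussianReal 0 v)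
        (⋃ i, {x | (s : ℝ) ≤ ∑ j, e i j * x j}) := by
        congr 1; ext x; simp [Set.mem_iUnion]
    _ ≤ ∑ i, (Measure.pi fun _ : Fin d => gaussianReal 0 v)
        {x | (s : ℝ) ≤ ∑ j, e i j * x j} := measure_iUnion_fintype_le _ _
    _ ≤ ∑ _i : Fin n, ENNReal.ofReal (Real.exp (-(d : ℝ) / 2)) :=
        Finset.sum_le_sum fun i _ => key i
    _ = n * ENNReal.ofReal (Real.exp (-(d : ℝ) / 2)) := by
        rw [Finset.sum_const, card_univ, Fintype.card_fin, nsmul_eq_mul]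
end
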